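/- Let β, β1, β2 ∈ (0,1) with β1 ≤ β and β2 ≤ β. Then the bound gap satisfies Δ(β,β1,β2) ≤ (1/108)·(β/β1 − 1)·(16·β/β1 + 11) + (1/108)·(β/β2 − 1)·(16·β/β2 + 11). -/
import Mathlib


/-- F_l(μ,β) = −(μ·ln((1−μ)·β + μ) + (1−μ)·ln(μ·β + (1−μ))). -/
noncomputable def Fl (μ β : ℝ) : ℝ :=
  -(μ * Real.log ((1 - μ) * β + μ) + (1 - μ) * Real.log (μ * β + (1 - μ)))

/-- F_u(μ,β1,β2) = −(μ·ln((1−μ)·β1 + μ) + (1−μ)·ln(μ·β2 + (1−μ))). -/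
noncomputable def Fu (μ β1 β2 : ℝ) : ℝ :=
  -(μ * Real.log ((1 - μ) * β1 + μ) + (1 - μ) * Real.log (μ * β2 + (1 - μ)))

/-- The bound gap Δ(β,β1,β2) = sup_{μ∈[0,1]} (F_u(μ,β1,β2) − F_l(μ,β)). -/
noncomputable def boundGap (β β1 β2 : ℝ) : ℝ :=
  ⨆ μ : Set.Icc (0:ℝ) 1, (Fu μ β1 β2 - Fl μ β)

lemma term_bound (μ b B : ℝ) (hμ0 : 0 ≤ μ) (hμ1 : μ ≤ 1) (hb : 0 < b) (hbB : b ≤ B)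
    (hB1 : B < 1) :
    μ * (Real.log ((1 - μ) * B + μ) - Real.log ((1 - μ) * b + μ)) ≤
      1 / 108 * (B / b - 1) * (16 * (B / b) + 11) := by
  set A : ℝ := (1 - μ) * b + μ with hA_def
  set A' : ℝ := (1 - μ) * B + μ with hA'_def
  have hb1 : b < 1 := lt_of_le_of_lt hbB hB1
  have hbA : b ≤ A := by nlinarith
  have hA : 0 < A := lt_of_lt_of_le hb hbA
  have hA' : 0 < A' := by nlinarith
  have hlog : Real.log A' - Real.log A ≤ A' / A - 1 := by
    rw [← Real.log_div (ne_of_gt hA') (ne_of_gt hA)]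
    exact Real.log_le_sub_one_of_pos (div_pos hA' hA)
  have h2 : μ * (Real.log A' - Real.log A) ≤ μ * (A' / A - 1) :=
    mul_le_mul_of_nonneg_left hlog hμ0
  have h3 : A' / A - 1 = ((1 - μ) * (B - b)) / A := by
    field_simp; ring
  have hnum : 0 ≤ (1 - μ) * (B - b) := by nlinarith
  have h4 : ((1 - μ) * (B - b)) / A ≤ ((1 - μ) * (B - b)) / b :=
    div_le_div_of_nonneg_left hnum hb hbA
  have h5 : μ * (((1 - μ) * (B - b)) / b) ≤ (1 / 4) * ((B - b) / b) := by
    have hnn : μ * ((1 - μ) * (B - b)) ≤ 1 / 4 * (B - b) := by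
      nlinarith [sq_nonneg (μ - 1/2)]
    calc μ * (((1 - μ) * (B - b)) / b) = (μ * ((1 - μ) * (B - b))) / b := by ring
      _ ≤ (1 / 4 * (B - b)) / b := (div_le_div_iff_of_pos_right hb).mpr hnn
      _ = (1 / 4) * ((B - b) / b) := by ring
  have hr1 : (1 : ℝ) ≤ B / b := (one_le_div hb).mpr hbB
  have h6 : (B - b) / b = B / b - 1 := by field_simp
  have h7 : (1 / 4) * (B / b - 1) ≤ 1 / 108 * (B / b - 1) * (16 * (B / b) + 11) := by
    nlinarith [sq_nonneg (B / b - 1)]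
  calc μ * (Real.log A' - Real.log A) ≤ μ * (A' / A - 1) := h2
    _ = μ * (((1 - μ) * (B - b)) / A) := by rw [h3]
    _ ≤ μ * (((1 - μ) * (B - b)) / b) := mul_le_mul_of_nonneg_left h4 hμ0
    _ ≤ (1 / 4) * ((B - b) / b) := h5
    _ = (1 / 4) * (B / b - 1) := by rw [h6]
    _ ≤ _ := h7

/-- low-SNR bound: for β, β1, β2 ∈ (0,1) with β1 ≤ β and β2 ≤ β,
Δ(β,β1,β2) ≤ (1/108)·(β/β1 − 1)·(16·β/β1 + 11) + (1/108)·(β/β2 − 1)·(16·β/β2 + 11). -/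
theorem boundGap_le_lowSNR (β β1 β2 : ℝ)
    (hβ : β ∈ Set.Ioo (0:ℝ) 1) (hβ1 : β1 ∈ Set.Ioo (0:ℝ) 1) (hβ2 : β2 ∈ Set.Ioo (0:ℝ) 1)
    (h1 : β1 ≤ β) (h2 : β2 ≤ β) :
    boundGap β β1 β2 ≤
      1 / 108 * (β / β1 - 1) * (16 * (β / β1) + 11) +
        1 / 108 * (β / β2 - 1) * (16 * (β / β2) + 11) := by
  haveI : Nonempty (Set.Icc (0:ℝ) 1) := ⟨⟨0, by norm_num⟩⟩
  apply ciSup_le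
  rintro ⟨μ, hμ0, hμ1⟩
  have key1 := term_bound μ β1 β hμ0 hμ1 hβ1.1 h1 hβ.2
  have key2 := term_bound (1 - μ) β2 β (by linarith) (by linarith) hβ2.1 h2 hβ.2
  have hsplit : Fu μ β1 β2 - Fl μ β =
      μ * (Real.log ((1 - μ) * β + μ) - Real.log ((1 - μ) * β1 + μ)) +
      (1 - μ) * (Real.log (μ * β + (1 - μ)) - Real.log (μ * β2 + (1 - μ))) := by
    simp only [Fu, Fl]; ring
  have heq : (1 - (1 - μ)) = μ := by ring
  rw [heq] at key2
  show Fu μ β1 β2 - Fl μ β ≤ _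
  rw [hsplit]
  linarith
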